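/- Let N ≥ 1, g > 0, and let l₁, …, l_N > 0 be real constants with Σ_α l_α = 1. Let h, u₁, …, u_N : ℝ × ℝ → ℝ be continuously differentiable functions of (t, x) with h > 0 everywhere, let z_b : ℝ → ℝ be continuously differentiable, and set ū = Σ_{α=1}^N l_α·u_α. Suppose that ∂_t h + ∂_x(h·ū) = 0 and, for every α, ∂_t(h·u_α) + ∂_x(h·u_α·ū + g·h²/2) = −g·h·∂_x z_b. Then the total energy E = g·h²/2 + g·h·z_b + Σ_{α=1}^N l_α·h·(u_α)²/2 satisfies the exact conservation law ∂_t E + ∂_x( g·h²·ū + g·h·z_b·ū + Σ_{α=1}^N l_α·h·(u_α)²·ū/2 ) = 0. -/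

import Mathlib

/-- smooth solutions of the barotropic step of the multilayer
shallow water system satisfy the exact energy conservation law
`∂_t E + ∂_x(g h² ū + g h z_b ū + Σ_α l_α h u_α² ū / 2) = 0` with
`E = g h²/2 + g h z_b + Σ_α l_α h u_α²/2`.  Partial derivatives of functions of
`(t, x)` are expressed as `deriv` of the corresponding one-variable slices. -/
theorem stmt17 (N : ℕ) (hN : 1 ≤ N) (g : ℝ) (hg : 0 < g)
    (l : Fin N → ℝ) (hl : ∀ α, 0 < l α) (hlsum : ∑ α, l α = 1)
    (h : ℝ → ℝ → ℝ) (u : Fin N → ℝ → ℝ → ℝ) (zb : ℝ → ℝ)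
    (hreg : ContDiff ℝ 1 (fun p : ℝ × ℝ => h p.1 p.2))
    (hureg : ∀ α, ContDiff ℝ 1 (fun p : ℝ × ℝ => u α p.1 p.2))
    (hzb : ContDiff ℝ 1 zb)
    (hpos : ∀ t x, 0 < h t x)
    (ubar : ℝ → ℝ → ℝ) (hubar : ∀ t x, ubar t x = ∑ α, l α * u α t x)
    (mass : ∀ t x, deriv (fun s => h s x) t + deriv (fun y => h t y * ubar t y) x = 0)
    (mom : ∀ α t x,
      deriv (fun s => h s x * u α s x) t
        + deriv (fun y => h t y * u α t y * ubar t y + g * (h t y) ^ 2 / 2) x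
      = -(g * h t x * deriv zb x)) :
    ∀ t x,
      deriv (fun s => g * (h s x) ^ 2 / 2 + g * h s x * zb x
          + ∑ α, l α * h s x * (u α s x) ^ 2 / 2) t
        + deriv (fun y => g * (h t y) ^ 2 * ubar t y + g * h t y * zb y * ubar t y
          + ∑ α, l α * h t y * (u α t y) ^ 2 * ubar t y / 2) x = 0 := by
  intro t x
  classical
  have hdiff := hreg.differentiable one_ne_zero
  have hudiff : ∀ α, Differentiable ℝ (fun p : ℝ × ℝ => u α p.1 p.2) :=
    fun α => (hureg α).differentiable one_ne_zero
  have hzd := hzb.differentiable one_ne_zero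
  have hA : HasDerivAt (fun s => h s x) (deriv (fun s => h s x) t) t := by
    have : DifferentiableAt ℝ (fun s => h s x) t :=
      by have := (hdiff (t, x)).comp t (differentiableAt_fun_id.prodMk (differentiableAt_const x) : DifferentiableAt ℝ (fun s : ℝ => (s, x)) t); exact this
    exact this.hasDerivAt
  have hB : HasDerivAt (fun y => h t y) (deriv (fun y => h t y) x) x := by
    have : DifferentiableAt ℝ (fun y => h t y) x :=
      (hdiff (t, x)).comp x ((differentiableAt_const t).prodMk differentiableAt_id)
    exact this.hasDerivAt
  have hC : ∀ α, HasDerivAt (fun s => u α s x) (deriv (fun s => u α s x) t) t := by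
    intro α
    have : DifferentiableAt ℝ (fun s => u α s x) t :=
      by have := (hudiff α (t, x)).comp t (differentiableAt_fun_id.prodMk (differentiableAt_const x) : DifferentiableAt ℝ (fun s : ℝ => (s, x)) t); exact this
    exact this.hasDerivAt
  have hD : ∀ α, HasDerivAt (fun y => u α t y) (deriv (fun y => u α t y) x) x := by
    intro α
    have : DifferentiableAt ℝ (fun y => u α t y) x :=
      (hudiff α (t, x)).comp x ((differentiableAt_const t).prodMk differentiableAt_id)
    exact this.hasDerivAt
  have hZ : HasDerivAt zb (deriv zb x) x := (hzd x).hasDerivAt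
  set A := deriv (fun s => h s x) t with hAdef
  set B := deriv (fun y => h t y) x with hBdef
  set C := fun α => deriv (fun s => u α s x) t with hCdef
  set D := fun α => deriv (fun y => u α t y) x with hDdef
  set Zx := deriv zb x with hZdef
  have hubfun : (fun y => ubar t y) = fun y => ∑ α, l α * u α t y := funext (hubar t)
  have hW : HasDerivAt (fun y => ubar t y) (∑ α, l α * D α) x := by
    rw [hubfun]
    exact HasDerivAt.fun_sum fun α _ => (hD α).const_mul (l α)
  set Wx := ∑ α, l α * D α with hWxdef
  -- scalar form of mass equation
  have mass' := mass t x
  rw [(hB.fun_mul hW).deriv, ← hAdef] at mass'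
  -- scalar form of momentum equations
  have mom' : ∀ α, A * u α t x + h t x * C α
      + ((B * u α t x + h t x * D α) * ubar t x + h t x * u α t x * Wx
          + g * ((2 : ℕ) * h t x ^ (2 - 1) * B) / 2)
      = -(g * h t x * Zx) := by
    intro α
    have m := mom α t x
    rw [(hA.fun_mul (hC α)).deriv, ((((hB.fun_mul (hD α)).fun_mul hW).fun_add
      (((hB.fun_pow 2).const_mul g).div_const 2))).deriv] at m
    linarith [m]
  -- derivative of the energy in time
  have hT : HasDerivAt (fun s => g * (h s x) ^ 2 / 2 + g * h s x * zb x
      + ∑ α, l α * h s x * (u α s x) ^ 2 / 2)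
      (g * ((2 : ℕ) * h t x ^ (2 - 1) * A) / 2 + (g * A) * zb x
        + ∑ α, ((l α * A) * (u α t x) ^ 2
            + (l α * h t x) * ((2 : ℕ) * (u α t x) ^ (2 - 1) * C α)) / 2) t :=
    ((((hA.pow 2).const_mul g).div_const 2).add
      ((hA.const_mul g).mul_const (zb x))).add
      (HasDerivAt.fun_sum fun α _ =>
        (((hA.const_mul (l α)).mul ((hC α).pow 2)).div_const 2))
  -- derivative of the energy flux in space
  have hX : HasDerivAt (fun y => g * (h t y) ^ 2 * ubar t y + g * h t y * zb y * ubar t y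
      + ∑ α, l α * h t y * (u α t y) ^ 2 * ubar t y / 2)
      ((g * ((2 : ℕ) * h t x ^ (2 - 1) * B)) * ubar t x + (g * (h t x) ^ 2) * Wx
        + (((g * B) * zb x + (g * h t x) * Zx) * ubar t x + (g * h t x * zb x) * Wx)
        + ∑ α, ((((l α * B) * (u α t x) ^ 2
              + (l α * h t x) * ((2 : ℕ) * (u α t x) ^ (2 - 1) * D α)) * ubar t x
            + (l α * h t x * (u α t x) ^ 2) * Wx) / 2)) x :=
    (((((hB.pow 2).const_mul g).mul hW).add
      (((hB.const_mul g).mul hZ).mul hW)).add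
      (HasDerivAt.fun_sum fun α _ =>
        ((((hB.const_mul (l α)).mul ((hD α).pow 2)).mul hW).div_const 2)))
  rw [hT.deriv, hX.deriv]
  -- reduce the two sums to scalar quantities
  have hs : (∑ α, ((l α * A) * (u α t x) ^ 2
            + (l α * h t x) * ((2 : ℕ) * (u α t x) ^ (2 - 1) * C α)) / 2)
        + (∑ α, ((((l α * B) * (u α t x) ^ 2
              + (l α * h t x) * ((2 : ℕ) * (u α t x) ^ (2 - 1) * D α)) * ubar t x
            + (l α * h t x * (u α t x) ^ 2) * Wx) / 2))
      = -((A + B * ubar t x + h t x * Wx) / 2) * (∑ α, l α * (u α t x) ^ 2)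
        - (g * h t x * (B + Zx)) * ubar t x := by
    rw [← Finset.sum_add_distrib]
    calc (∑ α, (((l α * A) * (u α t x) ^ 2
            + (l α * h t x) * ((2 : ℕ) * (u α t x) ^ (2 - 1) * C α)) / 2
          + ((((l α * B) * (u α t x) ^ 2
              + (l α * h t x) * ((2 : ℕ) * (u α t x) ^ (2 - 1) * D α)) * ubar t x
            + (l α * h t x * (u α t x) ^ 2) * Wx) / 2)))
        = ∑ α, (-((A + B * ubar t x + h t x * Wx) / 2) * (l α * (u α t x) ^ 2)
            - (g * h t x * (B + Zx)) * (l α * u α t x)) :=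
          Finset.sum_congr rfl fun α _ => by
            linear_combination (l α * u α t x) * mom' α
      _ = -((A + B * ubar t x + h t x * Wx) / 2) * (∑ α, l α * (u α t x) ^ 2)
            - (g * h t x * (B + Zx)) * (∑ α, l α * u α t x) := by
          rw [Finset.sum_sub_distrib, ← Finset.mul_sum, ← Finset.mul_sum]
      _ = -((A + B * ubar t x + h t x * Wx) / 2) * (∑ α, l α * (u α t x) ^ 2)
            - (g * h t x * (B + Zx)) * ubar t x := by rw [← hubar t x]
  linear_combination (g * h t x + g * zb x - (∑ α, l α * (u α t x) ^ 2) / 2) * mass' + hs
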